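/- The power set algebra P(ω) has the weak Freese-Nation property if and only if P(ω)/fin has the weak Freese-Nation property. -/
import Mathlib


universe u v

open Cardinal

/-- `f` is a κ-Freese-Nation mapping on the partial order `P`. -/
def IsFNMap (κ : Cardinal.{u}) {P : Type u} [PartialOrder P] (f : P → Set P) : Prop :=
  (∀ a, #(f a) < κ) ∧
    ∀ a b : P, a ≤ b → ∃ c, c ∈ f a ∧ c ∈ f b ∧ a ≤ c ∧ c ≤ b

/-- The partial order `P` has the κ-Freese-Nation property. -/
def HasFN (κ : Cardinal.{u}) (P : Type u) [PartialOrder P] : Prop :=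
  ∃ f : P → Set P, IsFNMap κ f

/-- `A` is a κ-substructure of the ambient partial order `P`: for every `b : P`,
`{a ∈ A | a ≤ b}` has a cofinal subset of size `< κ` and `{a ∈ A | b ≤ a}` has a
coinitial subset of size `< κ`. -/
def SubKappa (κ : Cardinal.{u}) {P : Type u} [PartialOrder P] (A : Set P) : Prop :=
  ∀ b : P,
    (∃ U : Set P, U ⊆ A ∧ #U < κ ∧ (∀ u ∈ U, u ≤ b) ∧
      (∀ a ∈ A, a ≤ b → ∃ u ∈ U, a ≤ u)) ∧
    (∃ V : Set P, V ⊆ A ∧ #V < κ ∧ (∀ v ∈ V, b ≤ v) ∧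
      (∀ a ∈ A, b ≤ a → ∃ v ∈ V, v ≤ a))

/-- `A ≤_κ B` for two subsets of an ambient partial order:
`A ⊆ B` and `A` is a κ-substructure of the suborder `B`. -/
def RelSubKappa (κ : Cardinal.{u}) {P : Type u} [PartialOrder P] (A B : Set P) : Prop :=
  A ⊆ B ∧ SubKappa κ {x : B | (x : P) ∈ A}


/-- P(ω) has the weak Freese-Nation property iff P(ω)/fin has it.  The quotient
P(ω)/fin is represented by any Boolean algebra Q together with a surjective Boolean
homomorphism from P(ω) whose kernel is exactly the ideal of finite sets. -/
theorem statement18 (Q : Type) [BooleanAlgebra Q] (h : Set ℕ → Q)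
    (hsup : ∀ x y : Set ℕ, h (x ∪ y) = h x ⊔ h y)
    (hcompl : ∀ x : Set ℕ, h xᶜ = (h x)ᶜ)
    (hsurj : Function.Surjective h)
    (hker : ∀ x : Set ℕ, h x = ⊥ ↔ x.Finite) :
    (HasFN (Cardinal.aleph 1) (Set ℕ) ↔ HasFN (Cardinal.aleph 1) Q) := by
  have hmono : ∀ x y : Set ℕ, x ⊆ y → h x ≤ h y := by
    intro x y hxy
    have : x ∪ y = y := Set.union_eq_self_of_subset_left hxy
    calc h x ≤ h x ⊔ h y := le_sup_left
    _ = h (x ∪ y) := (hsup x y).symm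
    _ = h y := by rw [this]
  have hinf : ∀ x y : Set ℕ, h (x ∩ y) = h x ⊓ h y := by
    intro x y
    have : x ∩ y = (xᶜ ∪ yᶜ)ᶜ := by
      rw [Set.compl_union, compl_compl, compl_compl]
    rw [this, hcompl, hsup, hcompl, hcompl, compl_sup, compl_compl, compl_compl]
  have hle : ∀ x y : Set ℕ, h x ≤ h y ↔ (x \ y).Finite := by
    intro x y
    rw [← hker (x \ y)]
    constructor
    · intro hxy
      have : h (x \ y) = h x ⊓ (h y)ᶜ := by rw [Set.diff_eq, hinf, hcompl]
      rw [this, le_bot_iff.symm]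
      calc h x ⊓ (h y)ᶜ ≤ h y ⊓ (h y)ᶜ := inf_le_inf_right _ hxy
      _ = ⊥ := inf_compl_eq_bot
    · intro hb
      have h1 : h x = h (x ∩ y) ⊔ h (x \ y) := by
        rw [← hsup, Set.inter_union_diff]
      rw [h1, hb, sup_bot_eq, hinf]
      exact inf_le_right
  obtain ⟨rep, hrep⟩ : ∃ rep : Q → Set ℕ, ∀ q, h (rep q) = q :=
    ⟨fun q => (hsurj q).choose, fun q => (hsurj q).choose_spec⟩
  have cnt : ∀ {α : Type} (S : Set α), #S < Cardinal.aleph 1 ↔ S.Countable := by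
    intro α S
    exact (Cardinal.countable_iff_lt_aleph_one S).symm
  constructor
  · rintro ⟨f, hf1, hf2⟩
    refine ⟨fun q => h '' (⋃ p : Finset ℕ × Finset ℕ, f ((rep q ∪ ↑p.1) \ ↑p.2)), ?_, ?_⟩
    · intro q
      rw [cnt]
      exact (Set.countable_iUnion fun p => (cnt _).mp (hf1 _)).image h
    · intro q r hqr
      have hfin : (rep q \ rep r).Finite := by
        rw [← hle, hrep, hrep]; exact hqr
      set t : Finset ℕ := hfin.toFinset with ht
      have hsub : rep q \ ↑t ⊆ rep r := by
        intro n hn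
        rcases hn with ⟨hn1, hn2⟩
        by_contra hc
        exact hn2 (by simp [ht, hfin.mem_toFinset]; exact ⟨hn1, hc⟩)
      obtain ⟨c, hc1, hc2, hc3, hc4⟩ := hf2 (rep q \ ↑t) (rep r) hsub
      refine ⟨h c, ?_, ?_, ?_, ?_⟩
      · exact ⟨c, Set.mem_iUnion.mpr ⟨(∅, t), by simpa using hc1⟩, rfl⟩
      · exact ⟨c, Set.mem_iUnion.mpr ⟨(∅, ∅), by simpa using hc2⟩, rfl⟩
      · have h1 : h (rep q) = h ((rep q \ ↑t) ∪ (rep q ∩ ↑t)) := by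
          rw [Set.diff_union_inter]
        have h2 : h (rep q ∩ ↑t) = ⊥ :=
          (hker _).mpr ((t.finite_toSet).subset Set.inter_subset_right)
        have key : h (rep q \ ↑t) = q := by
          conv_rhs => rw [← hrep q]
          rw [h1, hsup, h2, sup_bot_eq]
        rw [← key]; exact hmono _ _ hc3
      · calc h c ≤ h (rep r) := hmono _ _ hc4
        _ = r := hrep r
  · rintro ⟨g, hg1, hg2⟩
    refine ⟨fun x => (fun p : Q × Finset ℕ × Finset ℕ => (rep p.1 ∪ ↑p.2.1) \ ↑p.2.2) ''
        ((g (h x)) ×ˢ (Set.univ : Set (Finset ℕ × Finset ℕ))), ?_, ?_⟩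
    · intro x
      rw [cnt]
      exact (((cnt _).mp (hg1 _)).prod Set.countable_univ).image _
    · intro x y hxy
      obtain ⟨q, hq1, hq2, hq3, hq4⟩ := hg2 (h x) (h y) (hmono x y hxy)
      have hfx : (x \ rep q).Finite := by rw [← hle]; rw [hrep]; exact hq3
      have hfy : (rep q \ y).Finite := by rw [← hle]; rw [hrep]; exact hq4
      set s : Finset ℕ := hfx.toFinset
      set t : Finset ℕ := hfy.toFinset
      refine ⟨(rep q ∪ ↑s) \ ↑t, ⟨(q, s, t), ⟨hq1, Set.mem_univ _⟩, rfl⟩,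
        ⟨(q, s, t), ⟨hq2, Set.mem_univ _⟩, rfl⟩, ?_, ?_⟩
      · intro n hn
        constructor
        · by_cases hz : n ∈ rep q
          · exact Or.inl hz
          · exact Or.inr (by simp [s, hfx.mem_toFinset]; exact ⟨hn, hz⟩)
        · intro hc
          rw [Finset.mem_coe, hfy.mem_toFinset] at hc
          exact hc.2 (hxy hn)
      · rintro n ⟨hn1, hn2⟩
        rcases hn1 with hz | hs
        · by_contra hc
          exact hn2 (by rw [Finset.mem_coe, hfy.mem_toFinset]; exact ⟨hz, hc⟩)
        · rw [Finset.mem_coe, hfx.mem_toFinset] at hs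
          exact hxy hs.1
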